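/- Let d₁, d₂ be real numbers with 2 ≤ d₁ < d₂, and let r₋, r₊ be as defined. Then the interval integral from r₋ to r₊ of (1/π)·(d₁d₂/(d₁+d₂))·x·sqrt((x²−r₋²)·(r₊²−x²)) / (d₁d₂−x²) dx equals d₁d₂/(d₁+d₂). Equivalently, the second moment of the limiting spectral density (even in x, supported on r₋ ≤ |x| ≤ r₊ plus an atom at 0) equals the average degree 2d₁d₂/(d₁+d₂). -/

import Mathlib

open Real Set intervalIntegral

private lemma hasDerivAt_sq' (y : ℝ) : HasDerivAt (fun t : ℝ => t ^ 2) (2 * y) y := by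
  simpa using hasDerivAt_pow 2 y

set_option maxHeartbeats 1000000 in
private lemma rsrb_aux (e s : ℝ) (hs : 1 < s) (hse : 2 * s < e) :
    ∫ x in Real.sqrt (e - 2 * s)..Real.sqrt (e + 2 * s),
      x * Real.sqrt ((x ^ 2 - (e - 2 * s)) * (e + 2 * s - x ^ 2)) / (e + s ^ 2 + 1 - x ^ 2)
    = Real.pi := by
  have hπ : (0:ℝ) < Real.pi := Real.pi_pos
  have hs0 : 0 < s := lt_trans one_pos hs
  have ha0 : (0:ℝ) < e - 2 * s := by linarith
  have hb0 : (0:ℝ) < e + 2 * s := by linarith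
  have hs21 : (0:ℝ) < s ^ 2 - 1 := by nlinarith
  have hbc : e + 2 * s < e + s ^ 2 + 1 := by nlinarith
  set rm := Real.sqrt (e - 2 * s) with hrm_def
  set rp := Real.sqrt (e + 2 * s) with hrp_def
  have hrm2 : rm ^ 2 = e - 2 * s := Real.sq_sqrt ha0.le
  have hrp2 : rp ^ 2 = e + 2 * s := Real.sq_sqrt hb0.le
  have hrm0 : 0 < rm := Real.sqrt_pos.mpr ha0
  have hle : rm ≤ rp := Real.sqrt_le_sqrt (by linarith)
  set F : ℝ → ℝ := fun x => (1/2) *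
      (-Real.sqrt ((x ^ 2 - (e - 2 * s)) * (e + 2 * s - x ^ 2))
        + (s ^ 2 + 1) * Real.arcsin ((x ^ 2 - e) / (2 * s))
        - (s ^ 2 - 1) * Real.arcsin
            (((s ^ 2 + 1) * x ^ 2 - (4 * s ^ 2 + e * (s ^ 2 + 1))) /
              (2 * s * (e + s ^ 2 + 1 - x ^ 2)))) with hF_def
  have hden_ne : ∀ x ∈ Icc rm rp, e + s ^ 2 + 1 - x ^ 2 ≠ 0 := by
    intro x hx
    have hx2 : x ^ 2 ≤ e + 2 * s := by
      rw [← hrp2]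
      have h0 : 0 ≤ x := le_trans hrm0.le hx.1
      exact pow_le_pow_left₀ h0 hx.2 2
    nlinarith
  have hcontF : ContinuousOn F (Icc rm rp) := by
    rw [hF_def]
    refine continuousOn_const.mul (ContinuousOn.sub (ContinuousOn.add ?_ ?_) ?_)
    · exact (Real.continuous_sqrt.comp (by fun_prop)).continuousOn.neg
    · exact continuousOn_const.mul ((Real.continuous_arcsin.comp (by fun_prop)).continuousOn)
    · refine continuousOn_const.mul (Real.continuous_arcsin.comp_continuousOn
        (ContinuousOn.div (Continuous.continuousOn (by fun_prop))
          (Continuous.continuousOn (by fun_prop)) ?_))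
      intro x hx; exact mul_ne_zero (by positivity) (hden_ne x hx)
  have hint : IntervalIntegrable
      (fun x => x * Real.sqrt ((x ^ 2 - (e - 2 * s)) * (e + 2 * s - x ^ 2)) / (e + s ^ 2 + 1 - x ^ 2))
      MeasureTheory.volume rm rp := by
    apply ContinuousOn.intervalIntegrable
    rw [Set.uIcc_of_le hle]
    refine ContinuousOn.div ?_ ?_ hden_ne
    · exact (continuous_id.mul (Real.continuous_sqrt.comp (by fun_prop))).continuousOn
    · exact (by fun_prop : Continuous fun x : ℝ => e + s ^ 2 + 1 - x ^ 2).continuousOn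
  have hderiv : ∀ x ∈ Ioo rm rp,
      HasDerivWithinAt F
        (x * Real.sqrt ((x ^ 2 - (e - 2 * s)) * (e + 2 * s - x ^ 2)) / (e + s ^ 2 + 1 - x ^ 2))
        (Ioi x) x := by
    intro x hx
    have hx0 : 0 < x := lt_trans hrm0 hx.1
    have hxa : e - 2 * s < x ^ 2 := by nlinarith [hx.1, hrm0, hrm2]
    have hxb : x ^ 2 < e + 2 * s := by nlinarith [hx.2, hx0, hrp2]
    have hgpos : 0 < (x ^ 2 - (e - 2 * s)) * (e + 2 * s - x ^ 2) := by nlinarith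
    have hcu : 0 < e + s ^ 2 + 1 - x ^ 2 := by nlinarith
    set S := Real.sqrt ((x ^ 2 - (e - 2 * s)) * (e + 2 * s - x ^ 2)) with hS_def
    have hS0 : 0 < S := Real.sqrt_pos.mpr hgpos
    have hSsq : S ^ 2 = (x ^ 2 - (e - 2 * s)) * (e + 2 * s - x ^ 2) := Real.sq_sqrt hgpos.le
    have hwsq : ((x ^ 2 - e) / (2 * s)) ^ 2 < 1 := by
      rw [div_pow, div_lt_one (by positivity)]
      nlinarith
    have hw1 : ((x ^ 2 - e) / (2 * s)) ≠ -1 := by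
      intro h; rw [h] at hwsq; norm_num at hwsq
    have hw2 : ((x ^ 2 - e) / (2 * s)) ≠ 1 := by
      intro h; rw [h] at hwsq; norm_num at hwsq
    have key : (2 * s * (e + s ^ 2 + 1 - x ^ 2)) ^ 2
        - ((s ^ 2 + 1) * x ^ 2 - (4 * s ^ 2 + e * (s ^ 2 + 1))) ^ 2
        = (s ^ 2 - 1) ^ 2 * ((x ^ 2 - (e - 2 * s)) * (e + 2 * s - x ^ 2)) := by ring
    have hψsq : (((s ^ 2 + 1) * x ^ 2 - (4 * s ^ 2 + e * (s ^ 2 + 1))) /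
        (2 * s * (e + s ^ 2 + 1 - x ^ 2))) ^ 2 < 1 := by
      rw [div_pow, div_lt_one (by positivity)]
      have hpos : 0 < (s ^ 2 - 1) ^ 2 * ((x ^ 2 - (e - 2 * s)) * (e + 2 * s - x ^ 2)) :=
        mul_pos (pow_pos hs21 2) hgpos
      linarith
    have hψ1 : (((s ^ 2 + 1) * x ^ 2 - (4 * s ^ 2 + e * (s ^ 2 + 1))) /
        (2 * s * (e + s ^ 2 + 1 - x ^ 2))) ≠ -1 := by
      intro h; rw [h] at hψsq; norm_num at hψsq
    have hψ2 : (((s ^ 2 + 1) * x ^ 2 - (4 * s ^ 2 + e * (s ^ 2 + 1))) /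
        (2 * s * (e + s ^ 2 + 1 - x ^ 2))) ≠ 1 := by
      intro h; rw [h] at hψsq; norm_num at hψsq
    have h1 := (((hasDerivAt_sq' x).sub_const (e - 2 * s)).mul
        ((hasDerivAt_const x (e + 2 * s)).sub (hasDerivAt_sq' x))).sqrt hgpos.ne'
    have h2 := (Real.hasDerivAt_arcsin hw1 hw2).comp x
        (((hasDerivAt_sq' x).sub_const e).div_const (2 * s))
    have hdenD : HasDerivAt (fun y : ℝ => 2 * s * (e + s ^ 2 + 1 - y ^ 2))
        (2 * s * (0 - 2 * x)) x :=
      ((hasDerivAt_const x (e + s ^ 2 + 1)).sub (hasDerivAt_sq' x)).const_mul (2 * s)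
    have hnumD : HasDerivAt (fun y : ℝ => (s ^ 2 + 1) * y ^ 2 - (4 * s ^ 2 + e * (s ^ 2 + 1)))
        ((s ^ 2 + 1) * (2 * x)) x := ((hasDerivAt_sq' x).const_mul (s ^ 2 + 1)).sub_const _
    have h3' := hnumD.div hdenD (mul_ne_zero (by positivity) hcu.ne')
    have h3 := (Real.hasDerivAt_arcsin hψ1 hψ2).comp x h3'
    have hF' := ((h1.neg.add (h2.const_mul (s ^ 2 + 1))).sub
        (h3.const_mul (s ^ 2 - 1))).const_mul (1/2 : ℝ)
    have e1 : Real.sqrt (1 - ((x ^ 2 - e) / (2 * s)) ^ 2) = S / (2 * s) := by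
      rw [show 1 - ((x ^ 2 - e) / (2 * s)) ^ 2 = (S / (2 * s)) ^ 2 from by
        rw [div_pow, div_pow, hSsq]; field_simp; ring]
      exact Real.sqrt_sq (by positivity)
    have e2 : Real.sqrt (1 - (((s ^ 2 + 1) * x ^ 2 - (4 * s ^ 2 + e * (s ^ 2 + 1))) /
          (2 * s * (e + s ^ 2 + 1 - x ^ 2))) ^ 2)
        = (s ^ 2 - 1) * S / (2 * s * (e + s ^ 2 + 1 - x ^ 2)) := by
      rw [show 1 - (((s ^ 2 + 1) * x ^ 2 - (4 * s ^ 2 + e * (s ^ 2 + 1))) /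
            (2 * s * (e + s ^ 2 + 1 - x ^ 2))) ^ 2
          = ((s ^ 2 - 1) * S / (2 * s * (e + s ^ 2 + 1 - x ^ 2))) ^ 2 from by
        rw [div_pow, div_pow, mul_pow (s ^ 2 - 1) S 2, hSsq]; field_simp; ring]
      exact Real.sqrt_sq
        (div_nonneg (mul_nonneg hs21.le (Real.sqrt_nonneg _)) (by positivity))
    simp only [Pi.mul_apply, Pi.sub_apply] at hF'
    rw [e1, e2, ← hS_def] at hF'
    have hval : (1/2:ℝ) *
        (-((2 * x * (e + 2 * s - x ^ 2) + (x ^ 2 - (e - 2 * s)) * (0 - 2 * x)) / (2 * S))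
          + (s ^ 2 + 1) * (1 / (S / (2 * s)) * (2 * x / (2 * s)))
          - (s ^ 2 - 1) * (1 / ((s ^ 2 - 1) * S / (2 * s * (e + s ^ 2 + 1 - x ^ 2))) *
              (((s ^ 2 + 1) * (2 * x) * (2 * s * (e + s ^ 2 + 1 - x ^ 2)) -
                  ((s ^ 2 + 1) * x ^ 2 - (4 * s ^ 2 + e * (s ^ 2 + 1))) * (2 * s * (0 - 2 * x))) /
                (2 * s * (e + s ^ 2 + 1 - x ^ 2)) ^ 2)))
        = x * S / (e + s ^ 2 + 1 - x ^ 2) := by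
      field_simp
      linear_combination (-4 * x) * hSsq
    rw [hval] at hF'
    exact hF'.hasDerivWithinAt
  rw [intervalIntegral.integral_eq_sub_of_hasDeriv_right_of_le hle hcontF hderiv hint]
  have hd1 : (2 * s * (e + s ^ 2 + 1 - (e + 2 * s))) ≠ 0 := by
    nlinarith [mul_pos (mul_pos two_pos hs0) (mul_pos (sub_pos.mpr hs) (sub_pos.mpr hs))]
  have hd2 : (2 * s * (e + s ^ 2 + 1 - (e - 2 * s))) ≠ 0 := by
    nlinarith [mul_pos (mul_pos two_pos hs0) (mul_pos (add_pos hs0 (lt_trans one_pos hs)) (add_pos hs0 (lt_trans one_pos hs)))]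
  have t1 : Real.sqrt ((rp ^ 2 - (e - 2 * s)) * (e + 2 * s - rp ^ 2)) = 0 := by
    rw [hrp2, sub_self, mul_zero, Real.sqrt_zero]
  have t2 : Real.sqrt ((rm ^ 2 - (e - 2 * s)) * (e + 2 * s - rm ^ 2)) = 0 := by
    rw [hrm2, sub_self, zero_mul, Real.sqrt_zero]
  have t3 : (rp ^ 2 - e) / (2 * s) = 1 := by
    rw [hrp2]; field_simp; ring
  have t4 : (rm ^ 2 - e) / (2 * s) = -1 := by
    rw [hrm2]; field_simp; ring
  have t5 : ((s ^ 2 + 1) * rp ^ 2 - (4 * s ^ 2 + e * (s ^ 2 + 1))) /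
      (2 * s * (e + s ^ 2 + 1 - rp ^ 2)) = 1 := by
    rw [hrp2, div_eq_one_iff_eq hd1]; ring
  have t6 : ((s ^ 2 + 1) * rm ^ 2 - (4 * s ^ 2 + e * (s ^ 2 + 1))) /
      (2 * s * (e + s ^ 2 + 1 - rm ^ 2)) = -1 := by
    rw [hrm2, div_eq_iff hd2]; ring
  simp only [hF_def]
  rw [t1, t2, t3, t4, t5, t6, Real.arcsin_one, Real.arcsin_neg_one]
  ring

/-- For `2 ≤ d₁ < d₂`, with `r₋, r₊` the endpoints of the support of the limiting
spectral density of a random `(d₁,d₂)` semi-regular bipartite graph, the integral of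
`x` times the continuous part of the density over `[r₋, r₊]` equals `d₁d₂/(d₁+d₂)`,
i.e. half of the second moment (= average degree `2d₁d₂/(d₁+d₂)`) of the even density. -/
theorem rsrb_density_second_moment (d₁ d₂ : ℝ) (hd₁ : 2 ≤ d₁) (hd₁₂ : d₁ < d₂)
    (D rm rp : ℝ)
    (hD : D = Real.sqrt ((d₁ + d₂ - 2) ^ 2 - (d₂ - d₁) ^ 2))
    (hrp : rp = Real.sqrt (d₁ + d₂ - 2 + D))
    (hrm : rm = Real.sqrt (d₁ + d₂ - 2 - D)) :
    ∫ x in rm..rp,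
        (1 / Real.pi) * (d₁ * d₂ / (d₁ + d₂)) * x *
          Real.sqrt ((x ^ 2 - rm ^ 2) * (rp ^ 2 - x ^ 2)) / (d₁ * d₂ - x ^ 2)
      = d₁ * d₂ / (d₁ + d₂) := by
  have hπ : (0:ℝ) < Real.pi := Real.pi_pos
  have hd₂ : 2 < d₂ := lt_of_le_of_lt hd₁ hd₁₂
  have hp1 : (1:ℝ) < (d₁ - 1) * (d₂ - 1) := by nlinarith
  set s := Real.sqrt ((d₁ - 1) * (d₂ - 1)) with hs_def
  have hs2 : s ^ 2 = (d₁ - 1) * (d₂ - 1) := Real.sq_sqrt (by nlinarith)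
  have hs0 : 0 ≤ s := Real.sqrt_nonneg _
  have hs1 : 1 < s := by nlinarith
  have hD2 : D = 2 * s := by
    rw [hD, show (d₁ + d₂ - 2) ^ 2 - (d₂ - d₁) ^ 2 = (2 * s) ^ 2 by
      linear_combination (-4 : ℝ) * hs2]
    exact Real.sqrt_sq (by linarith)
  have hab0 : 0 < (d₁ + d₂ - 2 - 2 * s) * (d₁ + d₂ - 2 + 2 * s) := by
    have h : (d₁ + d₂ - 2 - 2 * s) * (d₁ + d₂ - 2 + 2 * s) = (d₂ - d₁) ^ 2 := by
      linear_combination (-4 : ℝ) * hs2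
    rw [h]; nlinarith
  have hse : 2 * s < d₁ + d₂ - 2 := by nlinarith [hab0]
  have hrm2 : rm ^ 2 = d₁ + d₂ - 2 - 2 * s := by
    rw [hrm, hD2]; exact Real.sq_sqrt (by linarith)
  have hrp2 : rp ^ 2 = d₁ + d₂ - 2 + 2 * s := by
    rw [hrp, hD2]; exact Real.sq_sqrt (by linarith)
  have hc : d₁ * d₂ = d₁ + d₂ - 2 + s ^ 2 + 1 := by linear_combination (-1 : ℝ) * hs2
  have key := rsrb_aux (d₁ + d₂ - 2) s hs1 hse
  rw [hrm2, hrp2, hc, hrm, hrp, hD2]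
  have hrw : ∀ x : ℝ, 1 / Real.pi * ((d₁ + d₂ - 2 + s ^ 2 + 1) / (d₁ + d₂)) * x *
      Real.sqrt ((x ^ 2 - (d₁ + d₂ - 2 - 2 * s)) * (d₁ + d₂ - 2 + 2 * s - x ^ 2)) /
      (d₁ + d₂ - 2 + s ^ 2 + 1 - x ^ 2)
      = (1 / Real.pi * ((d₁ + d₂ - 2 + s ^ 2 + 1) / (d₁ + d₂))) *
        (x * Real.sqrt ((x ^ 2 - (d₁ + d₂ - 2 - 2 * s)) * (d₁ + d₂ - 2 + 2 * s - x ^ 2)) /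
          (d₁ + d₂ - 2 + s ^ 2 + 1 - x ^ 2)) := fun x => by ring
  simp_rw [hrw]
  rw [intervalIntegral.integral_const_mul, key]
  have hd₁d₂ : d₁ + d₂ ≠ 0 := by positivity
  field_simp
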